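/- Let P and Q be finite sets of points in the plane, each in strictly convex position, and let f : P → Q be a bijection that preserves the orientation of every triple, i.e., for all pairwise distinct a, b, c ∈ P the sign of det(b − a, c − a) equals the sign of det(f(b) − f(a), f(c) − f(a)). Then for any two 3-element subsets {a,b,c} and {d,e,g} of P, the interiors of the convex hulls of {a,b,c} and {d,e,g} have a common point if and only if the interiors of the convex hulls of {f(a),f(b),f(c)} and {f(d),f(e),f(g)} have a common point. -/

import Mathlib

/-- A finite set of points in the plane is in strictly convex position if no three of its
points are collinear and every point of it is an extreme point of its convex hull. -/
def StrictConvexPos (P : Finset (ℝ × ℝ)) : Prop :=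
  (∀ a ∈ P, ∀ b ∈ P, ∀ c ∈ P, a ≠ b → a ≠ c → b ≠ c →
      ¬ Collinear ℝ ({a, b, c} : Set (ℝ × ℝ))) ∧
  ∀ p ∈ P, p ∈ Set.extremePoints ℝ (convexHull ℝ (P : Set (ℝ × ℝ)))

/-- The determinant of the 2×2 matrix with columns `u` and `v` in the plane. -/
def detp (u v : ℝ × ℝ) : ℝ := u.1 * v.2 - u.2 * v.1


/-- signed side of line (x,y) at q -/
def sideDet (x y q : ℝ × ℝ) : ℝ := detp (y - x) (q - x)

/-- twice signed area of triangle -/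
def tD (x y z : ℝ × ℝ) : ℝ := detp (y - x) (z - x)

def inTri (x y z q : ℝ × ℝ) : Prop :=
  0 < sideDet x y q * tD x y z ∧ 0 < sideDet y z q * tD x y z ∧ 0 < sideDet z x q * tD x y z

def inTriCl (x y z q : ℝ × ℝ) : Prop :=
  0 ≤ sideDet x y q * tD x y z ∧ 0 ≤ sideDet y z q * tD x y z ∧ 0 ≤ sideDet z x q * tD x y z

def Cross (x y u w : ℝ × ℝ) : Prop :=
  sideDet x y u * sideDet x y w < 0 ∧ sideDet u w x * sideDet u w y < 0

lemma sd_self_left (u v : ℝ × ℝ) : sideDet u v u = 0 := by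
  simp [sideDet, detp]; try ring

lemma sd_self_right (u v : ℝ × ℝ) : sideDet u v v = 0 := by
  simp [sideDet, detp]; try ring

lemma sd_yzx (x y z : ℝ × ℝ) : sideDet y z x = tD x y z := by
  simp [sideDet, tD, detp]; try ring

lemma sd_zxy (x y z : ℝ × ℝ) : sideDet z x y = tD x y z := by
  simp [sideDet, tD, detp]; try ring

lemma tD_cyc (x y z : ℝ × ℝ) : tD y z x = tD x y z := by
  simp [tD, detp]; try ring

lemma sd_swap (x y q : ℝ × ℝ) : sideDet y x q = - sideDet x y q := by
  simp [sideDet, detp]; try ring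

lemma sd_affine (u v p q : ℝ × ℝ) (lam mu : ℝ) (h : lam + mu = 1) :
    sideDet u v (lam • p + mu • q) = lam * sideDet u v p + mu * sideDet u v q := by
  have hmu : mu = 1 - lam := by linarith
  subst hmu
  simp [sideDet, detp]; try ring

lemma sd_translate (u v p w : ℝ × ℝ) : sideDet u v (p + w) = sideDet u v p + detp (v - u) w := by
  simp [sideDet, detp]; try ring

lemma bary_sum (x y z q : ℝ × ℝ) :
    sideDet y z q + sideDet z x q + sideDet x y q = tD x y z := by
  simp [sideDet, tD, detp]; try ring

lemma bary_repr (x y z q : ℝ × ℝ) :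
    (sideDet y z q) • x + (sideDet z x q) • y + (sideDet x y q) • z = (tD x y z) • q := by
  apply Prod.ext <;> · simp [sideDet, tD, detp]; try ring

lemma det_dep (A B Z : ℝ × ℝ) :
    (detp A B) • Z = (detp A Z) • B - (detp B Z) • A := by
  apply Prod.ext <;> · simp [detp]; try ring

lemma tD_ne_distinct {x y z : ℝ × ℝ} (h : tD x y z ≠ 0) : x ≠ y ∧ x ≠ z ∧ y ≠ z := by
  refine ⟨?_, ?_, ?_⟩ <;> rintro rfl <;> apply h <;> · simp [tD, detp]; try ring

lemma detp_smul_right (u w : ℝ × ℝ) (r : ℝ) : detp u (r • w) = r * detp u w := by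
  simp [detp]; try ring

lemma div_pos_of_mul_pos {s D : ℝ} (h : 0 < s * D) : 0 < s / D := by
  have hD : D ≠ 0 := by rintro rfl; simp at h
  have h2 : 0 < D * D := mul_self_pos.mpr hD
  have h3 : s / D = (s * D) / (D * D) := by field_simp
  rw [h3]; exact div_pos h h2

lemma div_nonneg_of_mul_nonneg {s D : ℝ} (hD : D ≠ 0) (h : 0 ≤ s * D) : 0 ≤ s / D := by
  have h2 : 0 < D * D := mul_self_pos.mpr hD
  have h3 : s / D = (s * D) / (D * D) := by field_simp
  rw [h3]; exact div_nonneg h h2.le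

lemma combo_mem_hull {x y z : ℝ × ℝ} {w1 w2 w3 : ℝ} (h1 : 0 ≤ w1) (h2 : 0 ≤ w2)
    (h3 : 0 ≤ w3) (hs : w1 + w2 + w3 = 1) :
    w1 • x + w2 • y + w3 • z ∈ convexHull ℝ ({x, y, z} : Set (ℝ × ℝ)) := by
  have hx : x ∈ convexHull ℝ ({x, y, z} : Set (ℝ × ℝ)) := subset_convexHull ℝ _ (by simp)
  have hy : y ∈ convexHull ℝ ({x, y, z} : Set (ℝ × ℝ)) := subset_convexHull ℝ _ (by simp)
  have hz : z ∈ convexHull ℝ ({x, y, z} : Set (ℝ × ℝ)) := subset_convexHull ℝ _ (by simp)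
  by_cases h23 : w2 + w3 = 0
  · have e2 : w2 = 0 := by linarith
    have e3 : w3 = 0 := by linarith
    have e1 : w1 = 1 := by linarith
    rw [e1, e2, e3]; simpa using hx
  · have h23' : 0 < w2 + w3 := lt_of_le_of_ne (by linarith) (Ne.symm h23)
    have hm : (w2/(w2+w3)) • y + (w3/(w2+w3)) • z ∈ convexHull ℝ ({x, y, z} : Set (ℝ × ℝ)) :=
      (convex_convexHull ℝ _).segment_subset hy hz
        ⟨w2/(w2+w3), w3/(w2+w3), div_nonneg h2 h23'.le, div_nonneg h3 h23'.le,
          by field_simp, rfl⟩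
    have key : w1 • x + w2 • y + w3 • z
        = w1 • x + (w2+w3) • ((w2/(w2+w3)) • y + (w3/(w2+w3)) • z) := by
      apply Prod.ext <;> (simp; field_simp; ring)
    rw [key]
    exact (convex_convexHull ℝ _).segment_subset hx hm ⟨w1, w2+w3, h1, h23'.le, by linarith, rfl⟩

lemma hull_sub_cl (x y z : ℝ × ℝ) :
    convexHull ℝ ({x, y, z} : Set (ℝ × ℝ)) ⊆ {q | inTriCl x y z q} := by
  apply convexHull_min
  · intro q hq
    simp only [Set.mem_insert_iff, Set.mem_singleton_iff] at hq
    rcases hq with rfl | rfl | rfl <;>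
      refine ⟨?_, ?_, ?_⟩ <;>
        simp [sd_self_left, sd_self_right, sd_yzx, sd_zxy, tD_cyc, mul_self_nonneg]
  · intro p hp q hq A B hA hB hAB
    obtain ⟨hp1, hp2, hp3⟩ := hp
    obtain ⟨hq1, hq2, hq3⟩ := hq
    refine ⟨?_, ?_, ?_⟩ <;> rw [sd_affine _ _ _ _ _ _ hAB] <;> nlinarith

lemma mem_hull_iff {x y z : ℝ × ℝ} (hD : tD x y z ≠ 0) (q : ℝ × ℝ) :
    q ∈ convexHull ℝ ({x, y, z} : Set (ℝ × ℝ)) ↔ inTriCl x y z q := by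
  constructor
  · exact fun h => hull_sub_cl x y z h
  · rintro ⟨h3, h1, h2⟩
    have w1 : 0 ≤ sideDet y z q / tD x y z := div_nonneg_of_mul_nonneg hD h1
    have w2 : 0 ≤ sideDet z x q / tD x y z := div_nonneg_of_mul_nonneg hD h2
    have w3 : 0 ≤ sideDet x y q / tD x y z := div_nonneg_of_mul_nonneg hD h3
    have hsum : sideDet y z q / tD x y z + sideDet z x q / tD x y z
        + sideDet x y q / tD x y z = 1 := by
      rw [← add_div, ← add_div, bary_sum, div_self hD]
    have hco : (sideDet y z q / tD x y z) • x + (sideDet z x q / tD x y z) • y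
        + (sideDet x y q / tD x y z) • z = q := by
      have h8 := bary_repr x y z q
      calc (sideDet y z q / tD x y z) • x + (sideDet z x q / tD x y z) • y
            + (sideDet x y q / tD x y z) • z
          = (tD x y z)⁻¹ • ((sideDet y z q) • x + (sideDet z x q) • y
            + (sideDet x y q) • z) := by
            simp only [smul_add, smul_smul, div_eq_inv_mul]
        _ = (tD x y z)⁻¹ • ((tD x y z) • q) := by rw [h8]
        _ = q := by rw [smul_smul, inv_mul_cancel₀ hD, one_smul]
    rw [← hco]
    exact combo_mem_hull w1 w2 w3 hsum

lemma cont_sd (u v : ℝ × ℝ) (D : ℝ) : Continuous fun q : ℝ × ℝ => sideDet u v q * D := by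
  have h : (fun q : ℝ × ℝ => sideDet u v q * D)
      = fun q : ℝ × ℝ => ((v.1-u.1) * (q.2-u.2) - (v.2-u.2)*(q.1-u.1))*D := by
    funext q; simp [sideDet, detp]
  rw [h]; fun_prop

lemma open_inTri (x y z : ℝ × ℝ) : IsOpen {q | inTri x y z q} := by
  have h : {q | inTri x y z q} = {q | 0 < sideDet x y q * tD x y z}
      ∩ ({q | 0 < sideDet y z q * tD x y z} ∩ {q | 0 < sideDet z x q * tD x y z}) := rfl
  rw [h]
  exact ((isOpen_lt continuous_const (cont_sd x y _))).inter
    (((isOpen_lt continuous_const (cont_sd y z _))).inter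
      ((isOpen_lt continuous_const (cont_sd z x _))))

lemma pos_on_interior {S : Set (ℝ × ℝ)} {u v q : ℝ × ℝ} {D : ℝ} (huv : u ≠ v) (hD : D ≠ 0)
    (hS : ∀ r ∈ S, 0 ≤ sideDet u v r * D) (hq : q ∈ interior S) : 0 < sideDet u v q * D := by
  have h0 : 0 ≤ sideDet u v q * D := hS q (interior_subset hq)
  rcases h0.lt_or_eq with h | h
  · exact h
  · exfalso
    obtain ⟨ε, hε, hball⟩ := Metric.isOpen_iff.mp isOpen_interior q hq
    set n : ℝ × ℝ := (-(v-u).2, (v-u).1) with hn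
    have hN : 0 < detp (v-u) n := by
      have hvu : v - u ≠ 0 := sub_ne_zero.mpr (Ne.symm huv)
      have he : detp (v-u) n = (v-u).1^2 + (v-u).2^2 := by simp [detp, hn]; ring
      rw [he]
      have h1 : (v-u).1 ≠ 0 ∨ (v-u).2 ≠ 0 := by
        by_contra hc; push_neg at hc; exact hvu (Prod.ext hc.1 hc.2)
      rcases h1 with h1 | h1 <;> positivity
    set δ := ε / (2 * (‖(D • n : ℝ × ℝ)‖ + 1)) with hδdef
    have hδ : 0 < δ := by positivity
    have hq' : q + (-δ) • (D • n) ∈ Metric.ball q ε := by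
      rw [Metric.mem_ball, dist_eq_norm, add_sub_cancel_left, norm_smul, Real.norm_eq_abs,
        abs_neg, abs_of_pos hδ]
      have hnn : (0:ℝ) ≤ ‖(D • n : ℝ × ℝ)‖ := norm_nonneg _
      rw [hδdef]
      rw [div_mul_eq_mul_div, div_lt_iff₀ (by positivity)]
      nlinarith
    have hmem := hS _ (interior_subset (hball hq'))
    rw [sd_translate] at hmem
    have hs0 : sideDet u v q = 0 := by
      rcases mul_eq_zero.mp h.symm with h' | h'
      · exact h'
      · exact absurd h' hD
    rw [hs0, detp_smul_right, detp_smul_right] at hmem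
    have hDD : 0 < D * D := mul_self_pos.mpr hD
    have hrw : (0 + -δ * (D * detp (v - u) n)) * D = -(δ * detp (v - u) n * (D * D)) := by ring
    rw [hrw] at hmem
    linarith [mul_pos (mul_pos hδ hN) hDD]

lemma int_hull_iff {x y z : ℝ × ℝ} (hD : tD x y z ≠ 0) (q : ℝ × ℝ) :
    q ∈ interior (convexHull ℝ ({x, y, z} : Set (ℝ × ℝ))) ↔ inTri x y z q := by
  obtain ⟨hxy, hxz, hyz⟩ := tD_ne_distinct hD
  constructor
  · intro h
    refine ⟨?_, ?_, ?_⟩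
    · exact pos_on_interior hxy hD (fun r hr => (hull_sub_cl x y z hr).1) h
    · exact pos_on_interior hyz hD (fun r hr => (hull_sub_cl x y z hr).2.1) h
    · exact pos_on_interior (Ne.symm hxz) hD (fun r hr => (hull_sub_cl x y z hr).2.2) h
  · intro h
    have hsub : {q | inTri x y z q} ⊆ convexHull ℝ ({x, y, z} : Set (ℝ × ℝ)) := by
      intro r hr
      exact (mem_hull_iff hD r).mpr ⟨hr.1.le, hr.2.1.le, hr.2.2.le⟩
    exact interior_maximal hsub (open_inTri x y z) h

lemma small_step {O : Set (ℝ × ℝ)} (hO : IsOpen O) {p : ℝ × ℝ} (hp : p ∈ O) (v : ℝ × ℝ) :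
    ∃ ε : ℝ, 0 < ε ∧ ε < 1 ∧ p + ε • v ∈ O := by
  obtain ⟨δ, hδ, hball⟩ := Metric.isOpen_iff.mp hO p hp
  have hεpos : 0 < min (1/2) (δ/(2*(‖v‖+1))) := lt_min (by norm_num) (by positivity)
  refine ⟨min (1/2) (δ/(2*(‖v‖+1))), hεpos, ?_, ?_⟩
  · exact lt_of_le_of_lt (min_le_left _ _) (by norm_num)
  · apply hball
    rw [Metric.mem_ball, dist_eq_norm, add_sub_cancel_left, norm_smul, Real.norm_eq_abs,
      abs_of_pos hεpos]
    have hnn : (0:ℝ) ≤ ‖v‖ := norm_nonneg v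
    calc min (1/2) (δ/(2*(‖v‖+1))) * ‖v‖ ≤ (δ/(2*(‖v‖+1))) * ‖v‖ :=
          mul_le_mul_of_nonneg_right (min_le_right _ _) hnn
      _ < δ := by rw [div_mul_eq_mul_div, div_lt_iff₀ (by positivity)]; nlinarith

lemma vertex_inTriCl (x y z : ℝ × ℝ) :
    inTriCl x y z x ∧ inTriCl x y z y ∧ inTriCl x y z z := by
  refine ⟨⟨?_, ?_, ?_⟩, ⟨?_, ?_, ?_⟩, ⟨?_, ?_, ?_⟩⟩ <;>
    simp [sd_self_left, sd_self_right, sd_yzx, sd_zxy, tD_cyc, mul_self_nonneg]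

lemma centroid_inTri {x y z : ℝ × ℝ} (hD : tD x y z ≠ 0) :
    inTri x y z ((1/3 : ℝ) • x + (1/3 : ℝ) • y + (1/3 : ℝ) • z) := by
  have hDD : 0 < tD x y z * tD x y z := mul_self_pos.mpr hD
  have c1 : sideDet x y ((1/3 : ℝ) • x + (1/3 : ℝ) • y + (1/3 : ℝ) • z) = tD x y z / 3 := by
    simp [sideDet, tD, detp]; ring
  have c2 : sideDet y z ((1/3 : ℝ) • x + (1/3 : ℝ) • y + (1/3 : ℝ) • z) = tD x y z / 3 := by
    simp [sideDet, tD, detp]; ring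
  have c3 : sideDet z x ((1/3 : ℝ) • x + (1/3 : ℝ) • y + (1/3 : ℝ) • z) = tD x y z / 3 := by
    simp [sideDet, tD, detp]; ring
  refine ⟨?_, ?_, ?_⟩
  · rw [c1]; nlinarith
  · rw [c2]; nlinarith
  · rw [c3]; nlinarith

lemma inTri_open_combo {x y z p o : ℝ × ℝ} {t : ℝ} (hp : inTri x y z p) (ho : inTriCl x y z o)
    (ht0 : 0 < t) (ht1 : t < 1) : inTri x y z ((1-t) • p + t • o) := by
  obtain ⟨h1, h2, h3⟩ := hp
  obtain ⟨g1, g2, g3⟩ := ho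
  refine ⟨?_, ?_, ?_⟩ <;> rw [sd_affine _ _ _ _ _ _ (by ring : (1-t) + t = 1)] <;> nlinarith

lemma bary_step (A B : ℝ) (hA : 0 < A) :
    ∃ τ : ℝ, 0 < τ ∧ τ ≤ 1 ∧ (∀ t, 0 ≤ t → t ≤ τ → 0 ≤ (1-t)*A + t*B) ∧
      (B < 0 → τ < 1 ∧ (1-τ)*A + τ*B = 0) ∧ (¬ B < 0 → τ = 1) := by
  by_cases hB : B < 0
  · have hden : 0 < A - B := by linarith
    refine ⟨A/(A-B), div_pos hA hden, ?_, ?_, ?_, ?_⟩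
    · rw [div_le_one hden]; linarith
    · intro t ht0 ht1
      have : t * (A - B) ≤ (A/(A-B)) * (A-B) := mul_le_mul_of_nonneg_right ht1 hden.le
      rw [div_mul_cancel₀ _ (ne_of_gt hden)] at this
      nlinarith
    · refine fun _ => ⟨by rw [div_lt_one hden]; linarith, ?_⟩
      field_simp
      ring
    · exact fun h => absurd hB h
  · refine ⟨1, one_pos, le_refl 1, ?_, fun h => absurd h hB, fun _ => rfl⟩
    intro t ht0 ht1
    push_neg at hB
    nlinarith

lemma exit_tri {x y z p o : ℝ × ℝ} (hD : tD x y z ≠ 0) (hp : inTri x y z p)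
    (ho : ¬ inTriCl x y z o) :
    ∃ t : ℝ, 0 < t ∧ t < 1 ∧ inTriCl x y z ((1-t) • p + t • o) ∧
      (sideDet x y ((1-t) • p + t • o) = 0 ∨ sideDet y z ((1-t) • p + t • o) = 0 ∨
       sideDet z x ((1-t) • p + t • o) = 0) := by
  obtain ⟨h1, h2, h3⟩ := hp
  set A1 := sideDet x y p * tD x y z
  set A2 := sideDet y z p * tD x y z
  set A3 := sideDet z x p * tD x y z
  set B1 := sideDet x y o * tD x y z with hB1
  set B2 := sideDet y z o * tD x y z with hB2
  set B3 := sideDet z x o * tD x y z with hB3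
  obtain ⟨τ1, hτ1p, hτ1le, hτ1mono, hτ1neg, hτ1pos⟩ := bary_step A1 B1 h1
  obtain ⟨τ2, hτ2p, hτ2le, hτ2mono, hτ2neg, hτ2pos⟩ := bary_step A2 B2 h2
  obtain ⟨τ3, hτ3p, hτ3le, hτ3mono, hτ3neg, hτ3pos⟩ := bary_step A3 B3 h3
  have hBneg : B1 < 0 ∨ B2 < 0 ∨ B3 < 0 := by
    by_contra hc
    push_neg at hc
    exact ho ⟨hc.1, hc.2.1, hc.2.2⟩
  set t := min τ1 (min τ2 τ3) with htdef
  have ht0 : 0 < t := lt_min hτ1p (lt_min hτ2p hτ3p)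
  have ht1 : t ≤ τ1 := min_le_left _ _
  have ht2 : t ≤ τ2 := le_trans (min_le_right _ _) (min_le_left _ _)
  have ht3 : t ≤ τ3 := le_trans (min_le_right _ _) (min_le_right _ _)
  have htlt1 : t < 1 := by
    rcases hBneg with h | h | h
    · exact lt_of_le_of_lt ht1 (hτ1neg h).1
    · exact lt_of_le_of_lt ht2 (hτ2neg h).1
    · exact lt_of_le_of_lt ht3 (hτ3neg h).1
  have key : ∀ u v : ℝ × ℝ, ∀ s : ℝ,
      sideDet u v ((1-s) • p + s • o) * tD x y z
        = (1-s) * (sideDet u v p * tD x y z) + s * (sideDet u v o * tD x y z) := by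
    intro u v s
    rw [sd_affine u v p o (1-s) s (by ring)]
    ring
  have hcl : inTriCl x y z ((1-t) • p + t • o) := by
    refine ⟨?_, ?_, ?_⟩
    · rw [key x y t]; exact hτ1mono t ht0.le ht1
    · rw [key y z t]; exact hτ2mono t ht0.le ht2
    · rw [key z x t]; exact hτ3mono t ht0.le ht3
  refine ⟨t, ht0, htlt1, hcl, ?_⟩
  have zero_of : ∀ u v : ℝ × ℝ, (1-t) * (sideDet u v p * tD x y z)
      + t * (sideDet u v o * tD x y z) = 0 → sideDet u v ((1-t) • p + t • o) = 0 := by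
    intro u v h
    have := key u v t
    rw [h] at this
    rcases mul_eq_zero.mp this with h' | h'
    · exact h'
    · exact absurd h' hD
  have hmin : t = τ1 ∨ t = τ2 ∨ t = τ3 := by
    rcases min_cases τ1 (min τ2 τ3) with ⟨h, _⟩ | ⟨h, _⟩
    · exact Or.inl h
    · rcases min_cases τ2 τ3 with ⟨h', _⟩ | ⟨h', _⟩
      · exact Or.inr (Or.inl (h.trans h'))
      · exact Or.inr (Or.inr (h.trans h'))
  rcases hmin with hm | hm | hm
  · left
    apply zero_of
    have hBn : B1 < 0 := by
      by_contra hc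
      rw [hτ1pos hc] at hm
      exact absurd hm (ne_of_lt htlt1)
    rw [hm]
    exact (hτ1neg hBn).2
  · right; left
    apply zero_of
    have hBn : B2 < 0 := by
      by_contra hc
      rw [hτ2pos hc] at hm
      exact absurd hm (ne_of_lt htlt1)
    rw [hm]
    exact (hτ2neg hBn).2
  · right; right
    apply zero_of
    have hBn : B3 < 0 := by
      by_contra hc
      rw [hτ3pos hc] at hm
      exact absurd hm (ne_of_lt htlt1)
    rw [hm]
    exact (hτ3neg hBn).2

lemma edge_or_vertex {x y z r : ℝ × ℝ} (hD : tD x y z ≠ 0)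
    (hz : sideDet x y r = 0) (h1 : 0 ≤ sideDet y z r * tD x y z)
    (h2 : 0 ≤ sideDet z x r * tD x y z) :
    r = x ∨ r = y ∨ ∃ lam mu : ℝ, 0 < lam ∧ 0 < mu ∧ lam + mu = 1 ∧ r = lam • x + mu • y := by
  have hrepr := bary_repr x y z r
  have hsum := bary_sum x y z r
  rw [hz] at hrepr hsum
  simp only [zero_smul, add_zero] at hrepr hsum
  by_cases hx : sideDet y z r = 0
  · right; left
    rw [hx] at hrepr hsum
    simp only [zero_smul, zero_add] at hrepr hsum
    rw [hsum] at hrepr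
    have := smul_right_injective (ℝ × ℝ) hD (hrepr)
    · exact this.symm
  · by_cases hy : sideDet z x r = 0
    · left
      rw [hy] at hrepr hsum
      simp only [zero_smul, add_zero, zero_add] at hrepr hsum
      rw [hsum] at hrepr
      exact (smul_right_injective (ℝ × ℝ) hD hrepr).symm
    · right; right
      have p1 : 0 < sideDet y z r * tD x y z := lt_of_le_of_ne h1 (fun hc => hx (by
        rcases mul_eq_zero.mp hc.symm with h' | h'
        · exact h'
        · exact absurd h' hD))
      have p2 : 0 < sideDet z x r * tD x y z := lt_of_le_of_ne h2 (fun hc => hy (by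
        rcases mul_eq_zero.mp hc.symm with h' | h'
        · exact h'
        · exact absurd h' hD))
      refine ⟨sideDet y z r / tD x y z, sideDet z x r / tD x y z,
        div_pos_of_mul_pos p1, div_pos_of_mul_pos p2, ?_, ?_⟩
      · rw [← add_div, hsum, div_self hD]
      · calc r = (tD x y z)⁻¹ • ((tD x y z) • r) := by
              rw [smul_smul, inv_mul_cancel₀ hD, one_smul]
          _ = (tD x y z)⁻¹ • ((sideDet y z r) • x + (sideDet z x r) • y) := by rw [hrepr]
          _ = (sideDet y z r / tD x y z) • x + (sideDet z x r / tD x y z) • y := by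
              simp only [smul_add, smul_smul, div_eq_inv_mul]
lemma cross_swap {x y u w : ℝ × ℝ} : Cross y x u w ↔ Cross x y u w := by
  unfold Cross
  have e1 : sideDet y x u * sideDet y x w = sideDet x y u * sideDet x y w := by
    rw [sd_swap x y u, sd_swap x y w]; ring
  have e2 : sideDet u w y * sideDet u w x = sideDet u w x * sideDet u w y := mul_comm _ _
  rw [e1, e2]

lemma cross_from_combo {x y u w s : ℝ × ℝ} {lam mu A B : ℝ}
    (hl : 0 < lam) (hm : 0 < mu) (hs : lam + mu = 1) (hA : 0 < A) (hB : 0 < B)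
    (hAB : A + B = 1) (h1 : s = lam • x + mu • y) (h2 : s = A • u + B • w)
    (huw : u ≠ w)
    (hPsix : detp (w - u) (x - u) ≠ 0)
    (hPhiu : u ≠ y → detp (y - x) (u - x) ≠ 0)
    (hPhiw : w ≠ y → detp (y - x) (w - x) ≠ 0) :
    Cross x y u w := by
  have phis0 : sideDet x y s = 0 := by
    rw [h1, sd_affine _ _ _ _ _ _ hs, sd_self_left, sd_self_right]; ring
  have psis0 : sideDet u w s = 0 := by
    rw [h2, sd_affine _ _ _ _ _ _ hAB, sd_self_left, sd_self_right]; ring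
  have comb1 : A * sideDet x y u + B * sideDet x y w = 0 := by
    rw [← sd_affine x y u w A B hAB, ← h2]; exact phis0
  have comb2 : lam * sideDet u w x + mu * sideDet u w y = 0 := by
    rw [← sd_affine u w x y lam mu hs, ← h1]; exact psis0
  constructor
  · by_cases hu : u = y
    · exfalso
      subst hu
      rw [sd_self_right, mul_zero, zero_add] at comb1
      have hw0 := (mul_eq_zero.mp comb1).resolve_left (ne_of_gt hB)
      exact hPhiw (Ne.symm huw) hw0
    · have hphiu : sideDet x y u ≠ 0 := hPhiu hu
      have h2' : sideDet x y w = -(A * sideDet x y u)/B := by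
        rw [eq_div_iff (ne_of_gt hB)]; linear_combination comb1
      rw [h2']
      have heq : sideDet x y u * (-(A * sideDet x y u) / B)
          = -((A/B) * (sideDet x y u * sideDet x y u)) := by field_simp [ne_of_gt hB]
      rw [heq]
      have hp := mul_self_pos.mpr hphiu
      have hq := div_pos hA hB
      nlinarith
  · have hpsix : sideDet u w x ≠ 0 := hPsix
    have h2' : sideDet u w y = -(lam * sideDet u w x)/mu := by
      rw [eq_div_iff (ne_of_gt hm)]; linear_combination comb2
    rw [h2']
    have heq : sideDet u w x * (-(lam * sideDet u w x) / mu)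
        = -((lam/mu) * (sideDet u w x * sideDet u w x)) := by field_simp [ne_of_gt hm]
    rw [heq]
    have hp := mul_self_pos.mpr hpsix
    have hq := div_pos hl hm
    nlinarith

lemma core_cross {x y d e g r : ℝ × ℝ} {lam mu : ℝ}
    (hgen : ∀ p q s : ℝ × ℝ, (p=x∨p=y∨p=d∨p=e∨p=g) → (q=x∨q=y∨q=d∨q=e∨q=g) →
      (s=x∨s=y∨s=d∨s=e∨s=g) → p≠q → p≠s → q≠s → detp (q-p) (s-p) ≠ 0)
    (hD2 : tD d e g ≠ 0) (hxy : x ≠ y)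
    (hr : r = lam • x + mu • y) (hlam : 0 < lam) (hmu : 0 < mu) (hsum : lam + mu = 1)
    (hrI : inTri d e g r) (hxout : ¬ inTriCl d e g x) :
    Cross x y d e ∨ Cross x y e g ∨ Cross x y g d := by
  obtain ⟨hde, hdg, heg⟩ := tD_ne_distinct hD2
  have mx : x = x ∨ x = y ∨ x = d ∨ x = e ∨ x = g := Or.inl rfl
  have my : y = x ∨ y = y ∨ y = d ∨ y = e ∨ y = g := Or.inr (Or.inl rfl)
  have md : d = x ∨ d = y ∨ d = d ∨ d = e ∨ d = g := Or.inr (Or.inr (Or.inl rfl))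
  have me : e = x ∨ e = y ∨ e = d ∨ e = e ∨ e = g := Or.inr (Or.inr (Or.inr (Or.inl rfl)))
  have mg : g = x ∨ g = y ∨ g = d ∨ g = e ∨ g = g := Or.inr (Or.inr (Or.inr (Or.inr rfl)))
  have hvert := vertex_inTriCl d e g
  have hxd : x ≠ d := by rintro rfl; exact hxout hvert.1
  have hxe : x ≠ e := by rintro rfl; exact hxout hvert.2.1
  have hxg : x ≠ g := by rintro rfl; exact hxout hvert.2.2
  obtain ⟨t, ht0, ht1, hsCl, hzero⟩ := exit_tri hD2 hrI hxout
  set s := (1-t) • r + t • x with hsdef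
  have hcombo : s = ((1-t)*lam + t) • x + ((1-t)*mu) • y := by
    rw [hsdef, hr]; apply Prod.ext <;> (simp; ring)
  have hl' : 0 < (1-t)*lam + t := by nlinarith
  have hm' : 0 < (1-t)*mu := by nlinarith
  have hs' : ((1-t)*lam + t) + ((1-t)*mu) = 1 := by nlinarith
  obtain ⟨hc1, hc2, hc3⟩ := hsCl
  have hsline : sideDet x y s = 0 := by
    rw [hcombo, sd_affine _ _ _ _ _ _ hs', sd_self_left, sd_self_right]; ring
  have hsnotvert : ∀ v : ℝ × ℝ, (v = d ∨ v = e ∨ v = g) → s ≠ v := by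
    intro v hv hsv
    have hvx : v ≠ x := by
      rcases hv with rfl | rfl | rfl
      exacts [Ne.symm hxd, Ne.symm hxe, Ne.symm hxg]
    have hvy : v ≠ y := by
      intro hveq
      have hy : ((1-t)*lam + t) • x + ((1-t)*mu) • y = y := by
        rw [← hcombo, hsv, hveq]
      have h1 : ((1-t)*lam + t) * x.1 + ((1-t)*mu) * y.1 = y.1 := by
        have := congrArg Prod.fst hy
        simpa using this
      have h2 : ((1-t)*lam + t) * x.2 + ((1-t)*mu) * y.2 = y.2 := by
        have := congrArg Prod.snd hy
        simpa using this
      have e1 : ((1-t)*lam + t) * (x.1 - y.1) = 0 := by linear_combination h1 - y.1 * hs'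
      have e2 : ((1-t)*lam + t) * (x.2 - y.2) = 0 := by linear_combination h2 - y.2 * hs'
      have hx1 : x.1 = y.1 := by
        rcases mul_eq_zero.mp e1 with h' | h'
        · exact absurd h' (ne_of_gt hl')
        · linarith
      have hx2 : x.2 = y.2 := by
        rcases mul_eq_zero.mp e2 with h' | h'
        · exact absurd h' (ne_of_gt hl')
        · linarith
      exact hxy (Prod.ext hx1 hx2)
    have hdet : detp (y - x) (v - x) = 0 := by
      have : sideDet x y v = 0 := by rw [← hsv]; exact hsline
      exact this
    exact hgen x y v mx my (by rcases hv with rfl | rfl | rfl; exacts [md, me, mg]) hxy (Ne.symm hvx)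
      (Ne.symm hvy) hdet
  rcases hzero with hz | hz | hz
  · -- edge (d,e)
    rcases edge_or_vertex hD2 hz hc2 hc3 with hv | hv | ⟨A, B, hA, hB, hAB, hrepr⟩
    · exact absurd hv (hsnotvert d (Or.inl rfl))
    · exact absurd hv (hsnotvert e (Or.inr (Or.inl rfl)))
    · left
      exact cross_from_combo hl' hm' hs' hA hB hAB hcombo hrepr hde
        (hgen d e x md me mx hde (Ne.symm hxd) (Ne.symm hxe))
        (fun h => hgen x y d mx my md hxy hxd (Ne.symm h))
        (fun h => hgen x y e mx my me hxy hxe (Ne.symm h))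
  · -- edge (e,g) : use triple (e,g,d)
    have hD2' : tD e g d ≠ 0 := by rw [tD_cyc]; exact hD2
    have hc3' : 0 ≤ sideDet g d s * tD e g d := by rw [tD_cyc]; exact hc3
    have hc1' : 0 ≤ sideDet d e s * tD e g d := by rw [tD_cyc]; exact hc1
    rcases edge_or_vertex hD2' hz hc3' hc1' with hv | hv | ⟨A, B, hA, hB, hAB, hrepr⟩
    · exact absurd hv (hsnotvert e (Or.inr (Or.inl rfl)))
    · exact absurd hv (hsnotvert g (Or.inr (Or.inr rfl)))
    · right; left
      exact cross_from_combo hl' hm' hs' hA hB hAB hcombo hrepr heg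
        (hgen e g x me mg mx heg (Ne.symm hxe) (Ne.symm hxg))
        (fun h => hgen x y e mx my me hxy hxe (Ne.symm h))
        (fun h => hgen x y g mx my mg hxy hxg (Ne.symm h))
  · -- edge (g,d) : use triple (g,d,e)
    have hD2' : tD g d e ≠ 0 := by rw [tD_cyc, tD_cyc]; exact hD2
    have hc1' : 0 ≤ sideDet d e s * tD g d e := by rw [tD_cyc, tD_cyc]; exact hc1
    have hc2' : 0 ≤ sideDet e g s * tD g d e := by rw [tD_cyc, tD_cyc]; exact hc2
    rcases edge_or_vertex hD2' hz hc1' hc2' with hv | hv | ⟨A, B, hA, hB, hAB, hrepr⟩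
    · exact absurd hv (hsnotvert g (Or.inr (Or.inr rfl)))
    · exact absurd hv (hsnotvert d (Or.inl rfl))
    · right; right
      have hgd : g ≠ d := Ne.symm hdg
      exact cross_from_combo hl' hm' hs' hA hB hAB hcombo hrepr hgd
        (hgen g d x mg md mx hgd (Ne.symm hxg) (Ne.symm hxd))
        (fun h => hgen x y g mx my mg hxy hxg (Ne.symm h))
        (fun h => hgen x y d mx my md hxy hxd (Ne.symm h))

lemma edge_cross {x y d e g r : ℝ × ℝ} {lam mu : ℝ}
    (hgen : ∀ p q s : ℝ × ℝ, (p=x∨p=y∨p=d∨p=e∨p=g) → (q=x∨q=y∨q=d∨q=e∨q=g) →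
      (s=x∨s=y∨s=d∨s=e∨s=g) → p≠q → p≠s → q≠s → detp (q-p) (s-p) ≠ 0)
    (hD2 : tD d e g ≠ 0) (hxy : x ≠ y)
    (hr : r = lam • x + mu • y) (hlam : 0 < lam) (hmu : 0 < mu) (hsum : lam + mu = 1)
    (hrI : inTri d e g r) :
    inTri d e g x ∨ inTri d e g y ∨ Cross x y d e ∨ Cross x y e g ∨ Cross x y g d := by
  obtain ⟨hde, hdg, heg⟩ := tD_ne_distinct hD2
  have mx : x = x ∨ x = y ∨ x = d ∨ x = e ∨ x = g := Or.inl rfl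
  have my : y = x ∨ y = y ∨ y = d ∨ y = e ∨ y = g := Or.inr (Or.inl rfl)
  have md : d = x ∨ d = y ∨ d = d ∨ d = e ∨ d = g := Or.inr (Or.inr (Or.inl rfl))
  have me : e = x ∨ e = y ∨ e = d ∨ e = e ∨ e = g := Or.inr (Or.inr (Or.inr (Or.inl rfl)))
  have mg : g = x ∨ g = y ∨ g = d ∨ g = e ∨ g = g := Or.inr (Or.inr (Or.inr (Or.inr rfl)))
  by_cases hx : inTri d e g x
  · exact Or.inl hx
  by_cases hy : inTri d e g y
  · exact Or.inr (Or.inl hy)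
  have memW : ∀ v : ℝ × ℝ, (v = x ∨ v = y) → inTriCl d e g v → ¬ inTri d e g v →
      (v = d ∨ v = e ∨ v = g) := by
    rintro v hvxy ⟨k1, k2, k3⟩ hnv
    have hzero : sideDet d e v = 0 ∨ sideDet e g v = 0 ∨ sideDet g d v = 0 := by
      by_contra hcon
      push_neg at hcon
      exact hnv ⟨lt_of_le_of_ne k1 (Ne.symm (mul_ne_zero hcon.1 hD2)),
        lt_of_le_of_ne k2 (Ne.symm (mul_ne_zero hcon.2.1 hD2)),
        lt_of_le_of_ne k3 (Ne.symm (mul_ne_zero hcon.2.2 hD2))⟩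
    rcases hzero with h0 | h0 | h0
    · by_cases h1 : v = d
      · exact Or.inl h1
      by_cases h2 : v = e
      · exact Or.inr (Or.inl h2)
      exact absurd h0 (hgen d e v md me (by rcases hvxy with rfl | rfl; exacts [mx, my]) hde (Ne.symm h1) (Ne.symm h2))
    · by_cases h1 : v = e
      · exact Or.inr (Or.inl h1)
      by_cases h2 : v = g
      · exact Or.inr (Or.inr h2)
      exact absurd h0 (hgen e g v me mg (by rcases hvxy with rfl | rfl; exacts [mx, my]) heg (Ne.symm h1) (Ne.symm h2))
    · by_cases h1 : v = g
      · exact Or.inr (Or.inr h1)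
      by_cases h2 : v = d
      · exact Or.inl h2
      exact absurd h0 (hgen g d v mg md (by rcases hvxy with rfl | rfl; exacts [mx, my]) (Ne.symm hdg)
        (Ne.symm h1) (Ne.symm h2))
  have notboth : ¬((x = d ∨ x = e ∨ x = g) ∧ (y = d ∨ y = e ∨ y = g)) := by
    rintro ⟨hxW, hyW⟩
    obtain ⟨q1, q2, q3⟩ := hrI
    have vanish : ∀ u v : ℝ × ℝ, (x = u ∧ y = v) ∨ (x = v ∧ y = u) →
        sideDet u v r = 0 := by
      rintro u v (⟨rfl, rfl⟩ | ⟨rfl, rfl⟩) <;>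
        rw [hr, sd_affine _ _ _ _ _ _ hsum, sd_self_left, sd_self_right] <;> ring
    rcases hxW with hx' | hx' | hx' <;> rcases hyW with hy' | hy' | hy'
    · exact hxy (hx'.trans hy'.symm)
    · rw [vanish d e (Or.inl ⟨hx', hy'⟩), zero_mul] at q1; exact lt_irrefl 0 q1
    · rw [vanish g d (Or.inr ⟨hx', hy'⟩), zero_mul] at q3; exact lt_irrefl 0 q3
    · rw [vanish d e (Or.inr ⟨hx', hy'⟩), zero_mul] at q1; exact lt_irrefl 0 q1
    · exact hxy (hx'.trans hy'.symm)
    · rw [vanish e g (Or.inl ⟨hx', hy'⟩), zero_mul] at q2; exact lt_irrefl 0 q2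
    · rw [vanish g d (Or.inl ⟨hx', hy'⟩), zero_mul] at q3; exact lt_irrefl 0 q3
    · rw [vanish e g (Or.inr ⟨hx', hy'⟩), zero_mul] at q2; exact lt_irrefl 0 q2
    · exact hxy (hx'.trans hy'.symm)
  by_cases hxW : x = d ∨ x = e ∨ x = g
  · have hyW : ¬(y = d ∨ y = e ∨ y = g) := fun h => notboth ⟨hxW, h⟩
    have hyout : ¬ inTriCl d e g y := fun hcl => hyW (memW y (Or.inr rfl) hcl hy)
    have hr' : r = mu • y + lam • x := by rw [hr, add_comm]
    have hgen' : ∀ p q s : ℝ × ℝ, (p=y∨p=x∨p=d∨p=e∨p=g) → (q=y∨q=x∨q=d∨q=e∨q=g) →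
        (s=y∨s=x∨s=d∨s=e∨s=g) → p≠q → p≠s → q≠s → detp (q-p) (s-p) ≠ 0 := by
      intro p q s hp hq hs
      have perm : ∀ v : ℝ × ℝ, (v=y∨v=x∨v=d∨v=e∨v=g) → (v=x∨v=y∨v=d∨v=e∨v=g) := by
        intro v hv
        rcases hv with h|h|h|h|h
        exacts [Or.inr (Or.inl h), Or.inl h, Or.inr (Or.inr (Or.inl h)),
          Or.inr (Or.inr (Or.inr (Or.inl h))), Or.inr (Or.inr (Or.inr (Or.inr h)))]
      exact hgen p q s (perm p hp) (perm q hq) (perm s hs)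
    have := core_cross hgen' hD2 (Ne.symm hxy) hr' hmu hlam (by linarith) hrI hyout
    rcases this with h | h | h
    · exact Or.inr (Or.inr (Or.inl (cross_swap.mp h)))
    · exact Or.inr (Or.inr (Or.inr (Or.inl (cross_swap.mp h))))
    · exact Or.inr (Or.inr (Or.inr (Or.inr (cross_swap.mp h))))
  · have hxout : ¬ inTriCl d e g x := fun hcl => hxW (memW x (Or.inl rfl) hcl hx)
    have := core_cross hgen hD2 hxy hr hlam hmu hsum hrI hxout
    rcases this with h | h | h
    · exact Or.inr (Or.inr (Or.inl h))
    · exact Or.inr (Or.inr (Or.inr (Or.inl h)))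
    · exact Or.inr (Or.inr (Or.inr (Or.inr h)))
lemma detp_self (u : ℝ × ℝ) : detp u u = 0 := by unfold detp; ring

lemma detp_antisym (u v : ℝ × ℝ) : detp v u = - detp u v := by unfold detp; ring

lemma ratio_bounds {A B : ℝ} (h : A * B < 0) : 0 < A/(A-B) ∧ A/(A-B) < 1 := by
  rcases mul_neg_iff.mp h with ⟨hA, hB⟩ | ⟨hA, hB⟩
  · have hden : 0 < A - B := by linarith
    exact ⟨div_pos hA hden, (div_lt_one hden).mpr (by linarith)⟩
  · have hden : A - B < 0 := by linarith
    constructor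
    · exact div_pos_iff.mpr (Or.inr ⟨hA, hden⟩)
    · have he : A/(A-B) - 1 = B/(A-B) := by
        rw [div_sub_one (ne_of_lt hden)]; congr 1; ring
      have : B/(A-B) < 0 := div_neg_of_pos_of_neg hB hden
      linarith

lemma inside_case {x y z d e g w : ℝ × ℝ} (hD1 : tD x y z ≠ 0) (hD2 : tD d e g ≠ 0)
    (hw : inTri x y z w) (hwcl : inTriCl d e g w) :
    (interior (convexHull ℝ ({x, y, z} : Set (ℝ × ℝ))) ∩
      interior (convexHull ℝ ({d, e, g} : Set (ℝ × ℝ)))).Nonempty := by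
  set m2 := (1/3 : ℝ) • d + (1/3 : ℝ) • e + (1/3 : ℝ) • g with hm2def
  have hm2 : inTri d e g m2 := centroid_inTri hD2
  have hwO : w ∈ interior (convexHull ℝ ({x, y, z} : Set (ℝ × ℝ))) :=
    (int_hull_iff hD1 w).mpr hw
  obtain ⟨ε, hε0, hε1, hq⟩ := small_step isOpen_interior hwO (m2 - w)
  refine ⟨w + ε • (m2 - w), hq, ?_⟩
  rw [int_hull_iff hD2]
  have hco : w + ε • (m2 - w) = (1-(1-ε)) • m2 + (1-ε) • w := by
    apply Prod.ext <;> (simp; ring)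
  rw [hco]
  exact inTri_open_combo hm2 hwcl (by linarith) (by linarith)

lemma cross_case {x y z u w m : ℝ × ℝ} (hD1 : tD x y z ≠ 0) (hD2 : tD u w m ≠ 0)
    (hc : Cross x y u w) :
    (interior (convexHull ℝ ({x, y, z} : Set (ℝ × ℝ))) ∩
      interior (convexHull ℝ ({u, w, m} : Set (ℝ × ℝ)))).Nonempty := by
  obtain ⟨hcphi, hcpsi⟩ := hc
  have hDD1 : 0 < tD x y z * tD x y z := mul_self_pos.mpr hD1
  have hDD2 : 0 < tD u w m * tD u w m := mul_self_pos.mpr hD2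
  have hden : detp (y-x) (w-u) ≠ 0 := by
    intro h0
    have he : sideDet x y w - sideDet x y u = detp (y-x) (w-u) := by
      simp [sideDet, detp]; ring
    rw [h0] at he
    have heq : sideDet x y w = sideDet x y u := by linarith
    rw [heq] at hcphi
    nlinarith [mul_self_nonneg (sideDet x y u)]
  -- intersection point p of the two lines
  set t := sideDet u w x / (sideDet u w x - sideDet u w y) with htdef
  obtain ⟨ht0, ht1⟩ := ratio_bounds hcpsi
  have hABne : sideDet u w x - sideDet u w y ≠ 0 := by
    intro h0
    have : sideDet u w x = sideDet u w y := by linarith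
    rw [this] at hcpsi
    nlinarith [mul_self_nonneg (sideDet u w y)]
  set p := (1-t) • x + t • y with hpdef
  have hppsi : sideDet u w p = 0 := by
    rw [hpdef, sd_affine _ _ _ _ _ _ (by ring)]
    rw [htdef]
    field_simp
    ring
  have hpphi : sideDet x y p = 0 := by
    rw [hpdef, sd_affine _ _ _ _ _ _ (by ring), sd_self_left, sd_self_right]; ring
  set s2 := sideDet x y u / (sideDet x y u - sideDet x y w) with hs2def
  obtain ⟨hs0, hs1⟩ := ratio_bounds hcphi
  have hCDne : sideDet x y u - sideDet x y w ≠ 0 := by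
    intro h0
    have : sideDet x y u = sideDet x y w := by linarith
    rw [this] at hcphi
    nlinarith [mul_self_nonneg (sideDet x y w)]
  set p' := (1-s2) • u + s2 • w with hp'def
  have hp'phi : sideDet x y p' = 0 := by
    rw [hp'def, sd_affine _ _ _ _ _ _ (by ring)]
    rw [hs2def]
    field_simp
    ring
  have hp'psi : sideDet u w p' = 0 := by
    rw [hp'def, sd_affine _ _ _ _ _ _ (by ring), sd_self_left, sd_self_right]; ring
  have hpp' : p = p' := by
    have d1 : detp (y-x) (p - p') = 0 := by
      have e1 : detp (y-x) (p - p') = sideDet x y p - sideDet x y p' := by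
        simp [sideDet, detp]; ring
      rw [e1, hpphi, hp'phi]; ring
    have d2 : detp (w-u) (p - p') = 0 := by
      have e2 : detp (w-u) (p - p') = sideDet u w p - sideDet u w p' := by
        simp [sideDet, detp]; ring
      rw [e2, hppsi, hp'psi]; ring
    have hdep := det_dep (y-x) (w-u) (p - p')
    rw [d1, d2] at hdep
    simp only [zero_smul, sub_zero] at hdep
    rcases smul_eq_zero.mp hdep with h' | h'
    · exact absurd h' hden
    · exact sub_eq_zero.mp h'
  -- direction vector
  set v := (detp (y-x) (w-u))⁻¹ • ((tD x y z) • (w-u) - (tD u w m) • (y-x)) with hvdef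
  have hv1 : detp (y-x) v = tD x y z := by
    have he : detp (y-x) v = (detp (y-x) (w-u))⁻¹ *
        (tD x y z * detp (y-x) (w-u) - tD u w m * detp (y-x) (y-x)) := by
      rw [hvdef]; simp [detp]; ring
    rw [he, detp_self, mul_zero, sub_zero]
    field_simp
    try ring
  have hv2 : detp (w-u) v = tD u w m := by
    have he : detp (w-u) v = (detp (y-x) (w-u))⁻¹ *
        (tD x y z * detp (w-u) (w-u) - tD u w m * detp (w-u) (y-x)) := by
      rw [hvdef]; simp [detp]; ring
    rw [he, detp_self, mul_zero, zero_sub, detp_antisym (y-x) (w-u)]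
    field_simp
    try ring
  -- the open set of the four side conditions
  set O : Set (ℝ × ℝ) := {q | 0 < sideDet y z q * tD x y z ∧ 0 < sideDet z x q * tD x y z ∧
    0 < sideDet w m q * tD u w m ∧ 0 < sideDet m u q * tD u w m} with hOdef
  have hO : IsOpen O := by
    have hOeq : O = {q | 0 < sideDet y z q * tD x y z} ∩ ({q | 0 < sideDet z x q * tD x y z} ∩
        ({q | 0 < sideDet w m q * tD u w m} ∩ {q | 0 < sideDet m u q * tD u w m})) := rfl
    rw [hOeq]
    exact (isOpen_lt continuous_const (cont_sd y z _)).inter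
      ((isOpen_lt continuous_const (cont_sd z x _)).inter
        ((isOpen_lt continuous_const (cont_sd w m _)).inter
          (isOpen_lt continuous_const (cont_sd m u _))))
  have hpO : p ∈ O := by
    refine ⟨?_, ?_, ?_, ?_⟩
    · have : sideDet y z p = (1-t) * tD x y z := by
        rw [hpdef, sd_affine _ _ _ _ _ _ (by ring), sd_self_left, sd_yzx]; ring
      rw [this]; nlinarith
    · have : sideDet z x p = t * tD x y z := by
        rw [hpdef, sd_affine _ _ _ _ _ _ (by ring), sd_self_right, sd_zxy]; ring
      rw [this]; nlinarith
    · have : sideDet w m p = (1-s2) * tD u w m := by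
        rw [hpp', hp'def, sd_affine _ _ _ _ _ _ (by ring), sd_self_left, sd_yzx]; ring
      rw [this]; nlinarith
    · have : sideDet m u p = s2 * tD u w m := by
        rw [hpp', hp'def, sd_affine _ _ _ _ _ _ (by ring), sd_self_right, sd_zxy]; ring
      rw [this]; nlinarith
  obtain ⟨ε, hε0, hε1, hqO⟩ := small_step hO hpO v
  refine ⟨p + ε • v, ?_, ?_⟩
  · rw [int_hull_iff hD1]
    refine ⟨?_, hqO.1, hqO.2.1⟩
    rw [sd_translate, hpphi, detp_smul_right, hv1, zero_add]
    nlinarith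
  · rw [int_hull_iff hD2]
    refine ⟨?_, hqO.2.2.1, hqO.2.2.2⟩
    rw [sd_translate, hppsi, detp_smul_right, hv2, zero_add]
    nlinarith
set_option maxHeartbeats 2000000

lemma triple_perm (x y z : ℝ × ℝ) : ({y, z, x} : Set (ℝ × ℝ)) = {x, y, z} := by
  ext q; simp; tauto

def Phi (a b c d e g : ℝ × ℝ) : Prop :=
  ({a, b, c} : Set (ℝ × ℝ)) = {d, e, g} ∨
  (inTri a b c d ∨ inTri a b c e ∨ inTri a b c g) ∨
  (inTri d e g a ∨ inTri d e g b ∨ inTri d e g c) ∨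
  ((Cross a b d e ∨ Cross a b e g ∨ Cross a b g d) ∨
   (Cross b c d e ∨ Cross b c e g ∨ Cross b c g d) ∨
   (Cross c a d e ∨ Cross c a e g ∨ Cross c a g d))

lemma mainChar (a b c d e g : ℝ × ℝ)
    (hab : a ≠ b) (hac : a ≠ c) (hbc : b ≠ c)
    (hde : d ≠ e) (hdg : d ≠ g) (heg : e ≠ g)
    (hgen : ∀ p q r : ℝ × ℝ, (p=a∨p=b∨p=c∨p=d∨p=e∨p=g) → (q=a∨q=b∨q=c∨q=d∨q=e∨q=g) →
      (r=a∨r=b∨r=c∨r=d∨r=e∨r=g) → p≠q → p≠r → q≠r → detp (q-p) (r-p) ≠ 0) :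
    (interior (convexHull ℝ ({a, b, c} : Set (ℝ × ℝ))) ∩
      interior (convexHull ℝ ({d, e, g} : Set (ℝ × ℝ)))).Nonempty ↔ Phi a b c d e g := by
  have Ma : a=a∨a=b∨a=c∨a=d∨a=e∨a=g := Or.inl rfl
  have Mb : b=a∨b=b∨b=c∨b=d∨b=e∨b=g := Or.inr (Or.inl rfl)
  have Mc : c=a∨c=b∨c=c∨c=d∨c=e∨c=g := Or.inr (Or.inr (Or.inl rfl))
  have Md : d=a∨d=b∨d=c∨d=d∨d=e∨d=g := Or.inr (Or.inr (Or.inr (Or.inl rfl)))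
  have Me : e=a∨e=b∨e=c∨e=d∨e=e∨e=g := Or.inr (Or.inr (Or.inr (Or.inr (Or.inl rfl))))
  have Mg : g=a∨g=b∨g=c∨g=d∨g=e∨g=g := Or.inr (Or.inr (Or.inr (Or.inr (Or.inr rfl))))
  have hD1 : tD a b c ≠ 0 := hgen a b c Ma Mb Mc hab hac hbc
  have hD2 : tD d e g ≠ 0 := hgen d e g Md Me Mg hde hdg heg
  have hD1b : tD b c a ≠ 0 := by rw [tD_cyc]; exact hD1
  have hD1c : tD c a b ≠ 0 := by rw [tD_cyc, tD_cyc]; exact hD1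
  have hD2e : tD e g d ≠ 0 := by rw [tD_cyc]; exact hD2
  have hD2g : tD g d e ≠ 0 := by rw [tD_cyc, tD_cyc]; exact hD2
  have hsbca : ({b, c, a} : Set (ℝ × ℝ)) = {a, b, c} := triple_perm a b c
  have hscab : ({c, a, b} : Set (ℝ × ℝ)) = {a, b, c} := (triple_perm b c a).trans (triple_perm a b c)
  have hsegd : ({e, g, d} : Set (ℝ × ℝ)) = {d, e, g} := triple_perm d e g
  have hsgde : ({g, d, e} : Set (ℝ × ℝ)) = {d, e, g} := (triple_perm e g d).trans (triple_perm d e g)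
  constructor
  · -- forward : intersection nonempty implies Phi
    rintro ⟨p, hp1, hp2⟩
    have hpt1 : inTri a b c p := (int_hull_iff hD1 p).mp hp1
    have hpt2 : inTri d e g p := (int_hull_iff hD2 p).mp hp2
    by_cases hVW : ({a, b, c} : Set (ℝ × ℝ)) = {d, e, g}
    · exact Or.inl hVW
    have hw0 : ∃ w₀ : ℝ × ℝ, (w₀ = d ∨ w₀ = e ∨ w₀ = g) ∧ ¬(w₀ = a ∨ w₀ = b ∨ w₀ = c) := by
      by_contra hcon
      push_neg at hcon
      apply hVW
      classical
      have hsub : ({d, e, g} : Finset (ℝ × ℝ)) ⊆ {a, b, c} := by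
        intro q hq
        simp only [Finset.mem_insert, Finset.mem_singleton] at hq ⊢
        rcases hq with rfl | rfl | rfl
        · exact hcon q (Or.inl rfl)
        · exact hcon q (Or.inr (Or.inl rfl))
        · exact hcon q (Or.inr (Or.inr rfl))
      have hcard1 : ({a, b, c} : Finset (ℝ × ℝ)).card = 3 := by
        rw [Finset.card_insert_of_notMem (by simp [hab, hac]),
          Finset.card_insert_of_notMem (by simp [hbc]), Finset.card_singleton]
      have hcard2 : ({d, e, g} : Finset (ℝ × ℝ)).card = 3 := by
        rw [Finset.card_insert_of_notMem (by simp [hde, hdg]),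
          Finset.card_insert_of_notMem (by simp [heg]), Finset.card_singleton]
      have heqF := Finset.eq_of_subset_of_card_le hsub (by rw [hcard1, hcard2])
      have hsets := congrArg (fun s : Finset (ℝ × ℝ) => (s : Set (ℝ × ℝ))) heqF
      simp only [Finset.coe_insert, Finset.coe_singleton] at hsets
      exact hsets.symm
    obtain ⟨w₀, hw₀W, hw₀V⟩ := hw0
    push_neg at hw₀V
    have hw₀mem : w₀=a∨w₀=b∨w₀=c∨w₀=d∨w₀=e∨w₀=g := by
      rcases hw₀W with h | h | h
      exacts [Or.inr (Or.inr (Or.inr (Or.inl h))),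
        Or.inr (Or.inr (Or.inr (Or.inr (Or.inl h)))),
        Or.inr (Or.inr (Or.inr (Or.inr (Or.inr h))))]
    have hw₀cl : inTriCl d e g w₀ := by
      rcases hw₀W with h | h | h <;> rw [h]
      exacts [(vertex_inTriCl d e g).1, (vertex_inTriCl d e g).2.1, (vertex_inTriCl d e g).2.2]
    by_cases hw₀I : inTri a b c w₀
    · right; left
      rcases hw₀W with h | h | h
      exacts [Or.inl (h ▸ hw₀I), Or.inr (Or.inl (h ▸ hw₀I)), Or.inr (Or.inr (h ▸ hw₀I))]
    have hw₀ncl : ¬ inTriCl a b c w₀ := by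
      rintro ⟨k1, k2, k3⟩
      have hzero : sideDet a b w₀ = 0 ∨ sideDet b c w₀ = 0 ∨ sideDet c a w₀ = 0 := by
        by_contra hcon
        push_neg at hcon
        exact hw₀I ⟨lt_of_le_of_ne k1 (Ne.symm (mul_ne_zero hcon.1 hD1)),
          lt_of_le_of_ne k2 (Ne.symm (mul_ne_zero hcon.2.1 hD1)),
          lt_of_le_of_ne k3 (Ne.symm (mul_ne_zero hcon.2.2 hD1))⟩
      rcases hzero with h0 | h0 | h0
      · exact hgen a b w₀ Ma Mb hw₀mem hab (Ne.symm hw₀V.1) (Ne.symm hw₀V.2.1) h0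
      · exact hgen b c w₀ Mb Mc hw₀mem hbc (Ne.symm hw₀V.2.1) (Ne.symm hw₀V.2.2) h0
      · exact hgen c a w₀ Mc Ma hw₀mem (Ne.symm hac) (Ne.symm hw₀V.2.2) (Ne.symm hw₀V.1) h0
    obtain ⟨t, ht0, ht1, hrCl, hzero⟩ := exit_tri hD1 hpt1 hw₀ncl
    have hrI2 : inTri d e g ((1-t) • p + t • w₀) := inTri_open_combo hpt2 hw₀cl ht0 ht1
    obtain ⟨k1, k2, k3⟩ := hrCl
    rcases hzero with hz | hz | hz
    · -- edge (a,b)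
      rcases edge_or_vertex hD1 hz k2 k3 with hv | hv | ⟨lam, mu, hl, hm, hs, hrepr⟩
      · rw [hv] at hrI2; exact Or.inr (Or.inr (Or.inl (Or.inl hrI2)))
      · rw [hv] at hrI2; exact Or.inr (Or.inr (Or.inl (Or.inr (Or.inl hrI2))))
      · have hgen5 : ∀ p' q' s' : ℝ × ℝ, (p'=a∨p'=b∨p'=d∨p'=e∨p'=g) →
            (q'=a∨q'=b∨q'=d∨q'=e∨q'=g) → (s'=a∨s'=b∨s'=d∨s'=e∨s'=g) →
            p'≠q' → p'≠s' → q'≠s' → detp (q'-p') (s'-p') ≠ 0 := by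
          intro p' q' s' hp hq hs'
          have map5 : ∀ v : ℝ × ℝ, (v=a∨v=b∨v=d∨v=e∨v=g) → (v=a∨v=b∨v=c∨v=d∨v=e∨v=g) := by
            intro v hv
            rcases hv with h|h|h|h|h
            exacts [Or.inl h, Or.inr (Or.inl h), Or.inr (Or.inr (Or.inr (Or.inl h))),
              Or.inr (Or.inr (Or.inr (Or.inr (Or.inl h)))),
              Or.inr (Or.inr (Or.inr (Or.inr (Or.inr h))))]
          exact hgen p' q' s' (map5 p' hp) (map5 q' hq) (map5 s' hs')
        rcases edge_cross hgen5 hD2 hab hrepr hl hm hs hrI2 with h | h | h | h | h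
        · exact Or.inr (Or.inr (Or.inl (Or.inl h)))
        · exact Or.inr (Or.inr (Or.inl (Or.inr (Or.inl h))))
        · exact Or.inr (Or.inr (Or.inr (Or.inl (Or.inl h))))
        · exact Or.inr (Or.inr (Or.inr (Or.inl (Or.inr (Or.inl h)))))
        · exact Or.inr (Or.inr (Or.inr (Or.inl (Or.inr (Or.inr h)))))
    · -- edge (b,c)
      have k3' : 0 ≤ sideDet c a ((1-t) • p + t • w₀) * tD b c a := by rw [tD_cyc]; exact k3
      have k1' : 0 ≤ sideDet a b ((1-t) • p + t • w₀) * tD b c a := by rw [tD_cyc]; exact k1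
      rcases edge_or_vertex hD1b hz k3' k1' with hv | hv | ⟨lam, mu, hl, hm, hs, hrepr⟩
      · rw [hv] at hrI2; exact Or.inr (Or.inr (Or.inl (Or.inr (Or.inl hrI2))))
      · rw [hv] at hrI2; exact Or.inr (Or.inr (Or.inl (Or.inr (Or.inr hrI2))))
      · have hgen5 : ∀ p' q' s' : ℝ × ℝ, (p'=b∨p'=c∨p'=d∨p'=e∨p'=g) →
            (q'=b∨q'=c∨q'=d∨q'=e∨q'=g) → (s'=b∨s'=c∨s'=d∨s'=e∨s'=g) →
            p'≠q' → p'≠s' → q'≠s' → detp (q'-p') (s'-p') ≠ 0 := by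
          intro p' q' s' hp hq hs'
          have map5 : ∀ v : ℝ × ℝ, (v=b∨v=c∨v=d∨v=e∨v=g) → (v=a∨v=b∨v=c∨v=d∨v=e∨v=g) := by
            intro v hv
            rcases hv with h|h|h|h|h
            exacts [Or.inr (Or.inl h), Or.inr (Or.inr (Or.inl h)),
              Or.inr (Or.inr (Or.inr (Or.inl h))),
              Or.inr (Or.inr (Or.inr (Or.inr (Or.inl h)))),
              Or.inr (Or.inr (Or.inr (Or.inr (Or.inr h))))]
          exact hgen p' q' s' (map5 p' hp) (map5 q' hq) (map5 s' hs')
        rcases edge_cross hgen5 hD2 hbc hrepr hl hm hs hrI2 with h | h | h | h | h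
        · exact Or.inr (Or.inr (Or.inl (Or.inr (Or.inl h))))
        · exact Or.inr (Or.inr (Or.inl (Or.inr (Or.inr h))))
        · exact Or.inr (Or.inr (Or.inr (Or.inr (Or.inl (Or.inl h)))))
        · exact Or.inr (Or.inr (Or.inr (Or.inr (Or.inl (Or.inr (Or.inl h))))))
        · exact Or.inr (Or.inr (Or.inr (Or.inr (Or.inl (Or.inr (Or.inr h))))))
    · -- edge (c,a)
      have k1' : 0 ≤ sideDet a b ((1-t) • p + t • w₀) * tD c a b := by
        rw [tD_cyc, tD_cyc]; exact k1
      have k2' : 0 ≤ sideDet b c ((1-t) • p + t • w₀) * tD c a b := by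
        rw [tD_cyc, tD_cyc]; exact k2
      rcases edge_or_vertex hD1c hz k1' k2' with hv | hv | ⟨lam, mu, hl, hm, hs, hrepr⟩
      · rw [hv] at hrI2; exact Or.inr (Or.inr (Or.inl (Or.inr (Or.inr hrI2))))
      · rw [hv] at hrI2; exact Or.inr (Or.inr (Or.inl (Or.inl hrI2)))
      · have hgen5 : ∀ p' q' s' : ℝ × ℝ, (p'=c∨p'=a∨p'=d∨p'=e∨p'=g) →
            (q'=c∨q'=a∨q'=d∨q'=e∨q'=g) → (s'=c∨s'=a∨s'=d∨s'=e∨s'=g) →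
            p'≠q' → p'≠s' → q'≠s' → detp (q'-p') (s'-p') ≠ 0 := by
          intro p' q' s' hp hq hs'
          have map5 : ∀ v : ℝ × ℝ, (v=c∨v=a∨v=d∨v=e∨v=g) → (v=a∨v=b∨v=c∨v=d∨v=e∨v=g) := by
            intro v hv
            rcases hv with h|h|h|h|h
            exacts [Or.inr (Or.inr (Or.inl h)), Or.inl h,
              Or.inr (Or.inr (Or.inr (Or.inl h))),
              Or.inr (Or.inr (Or.inr (Or.inr (Or.inl h)))),
              Or.inr (Or.inr (Or.inr (Or.inr (Or.inr h))))]
          exact hgen p' q' s' (map5 p' hp) (map5 q' hq) (map5 s' hs')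
        rcases edge_cross hgen5 hD2 (Ne.symm hac) hrepr hl hm hs hrI2 with h | h | h | h | h
        · exact Or.inr (Or.inr (Or.inl (Or.inr (Or.inr h))))
        · exact Or.inr (Or.inr (Or.inl (Or.inl h)))
        · exact Or.inr (Or.inr (Or.inr (Or.inr (Or.inr (Or.inl h)))))
        · exact Or.inr (Or.inr (Or.inr (Or.inr (Or.inr (Or.inr (Or.inl h))))))
        · exact Or.inr (Or.inr (Or.inr (Or.inr (Or.inr (Or.inr (Or.inr h))))))
  · -- backward : Phi implies intersection nonempty
    intro hPhi
    rcases hPhi with hset | (h|h|h) | (h|h|h) | ((h|h|h)|(h|h|h)|(h|h|h))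
    · have hrw : convexHull ℝ ({a,b,c} : Set (ℝ × ℝ)) = convexHull ℝ ({d,e,g} : Set (ℝ × ℝ)) := by
        rw [hset]
      rw [hrw, Set.inter_self]
      exact ⟨_, (int_hull_iff hD2 _).mpr (centroid_inTri hD2)⟩
    · exact inside_case hD1 hD2 h (vertex_inTriCl d e g).1
    · exact inside_case hD1 hD2 h (vertex_inTriCl d e g).2.1
    · exact inside_case hD1 hD2 h (vertex_inTriCl d e g).2.2
    · obtain ⟨q, h1, h2⟩ := inside_case hD2 hD1 h (vertex_inTriCl a b c).1
      exact ⟨q, h2, h1⟩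
    · obtain ⟨q, h1, h2⟩ := inside_case hD2 hD1 h (vertex_inTriCl a b c).2.1
      exact ⟨q, h2, h1⟩
    · obtain ⟨q, h1, h2⟩ := inside_case hD2 hD1 h (vertex_inTriCl a b c).2.2
      exact ⟨q, h2, h1⟩
    · exact cross_case hD1 hD2 h
    · obtain ⟨q, h1, h2⟩ := cross_case hD1 hD2e h
      rw [hsegd] at h2
      exact ⟨q, h1, h2⟩
    · obtain ⟨q, h1, h2⟩ := cross_case hD1 hD2g h
      rw [hsgde] at h2
      exact ⟨q, h1, h2⟩
    · obtain ⟨q, h1, h2⟩ := cross_case hD1b hD2 h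
      rw [hsbca] at h1
      exact ⟨q, h1, h2⟩
    · obtain ⟨q, h1, h2⟩ := cross_case hD1b hD2e h
      rw [hsbca] at h1
      rw [hsegd] at h2
      exact ⟨q, h1, h2⟩
    · obtain ⟨q, h1, h2⟩ := cross_case hD1b hD2g h
      rw [hsbca] at h1
      rw [hsgde] at h2
      exact ⟨q, h1, h2⟩
    · obtain ⟨q, h1, h2⟩ := cross_case hD1c hD2 h
      rw [hscab] at h1
      exact ⟨q, h1, h2⟩
    · obtain ⟨q, h1, h2⟩ := cross_case hD1c hD2e h
      rw [hscab] at h1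
      rw [hsegd] at h2
      exact ⟨q, h1, h2⟩
    · obtain ⟨q, h1, h2⟩ := cross_case hD1c hD2g h
      rw [hscab] at h1
      rw [hsgde] at h2
      exact ⟨q, h1, h2⟩
lemma detp_zero_left (v : ℝ × ℝ) : detp 0 v = 0 := by unfold detp; simp

lemma detp_zero_right (v : ℝ × ℝ) : detp v 0 = 0 := by unfold detp; simp

def SgnIff (A B : ℝ) : Prop := (0 < A ↔ 0 < B) ∧ (A < 0 ↔ B < 0)

lemma sgnIff_of_zero {A B : ℝ} (hA : A = 0) (hB : B = 0) : SgnIff A B := by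
  subst hA; subst hB; exact ⟨Iff.rfl, Iff.rfl⟩

lemma sgn_transfer {A B : ℝ} (hA : A ≠ 0) (hB : B ≠ 0) (h : Real.sign A = Real.sign B) :
    SgnIff A B := by
  rcases lt_or_gt_of_ne hA with h1 | h1 <;> rcases lt_or_gt_of_ne hB with h2 | h2
  · exact ⟨⟨fun h' => absurd h' (by linarith), fun h' => absurd h' (by linarith)⟩,
      ⟨fun _ => h2, fun _ => h1⟩⟩
  · rw [Real.sign_of_neg h1, Real.sign_of_pos h2] at h; norm_num at h
  · rw [Real.sign_of_pos h1, Real.sign_of_neg h2] at h; norm_num at h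
  · exact ⟨⟨fun _ => h2, fun _ => h1⟩,
      ⟨fun h' => absurd h' (by linarith), fun h' => absurd h' (by linarith)⟩⟩

lemma prod_pos_transfer {A A' B B' : ℝ} (hA : SgnIff A A') (hB : SgnIff B B') :
    0 < A * B ↔ 0 < A' * B' := by
  rw [mul_pos_iff, mul_pos_iff, hA.1, hA.2, hB.1, hB.2]

lemma prod_neg_transfer {A A' B B' : ℝ} (hA : SgnIff A A') (hB : SgnIff B B') :
    A * B < 0 ↔ A' * B' < 0 := by
  rw [mul_neg_iff, mul_neg_iff, hA.1, hA.2, hB.1, hB.2]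

lemma inTri_transfer {x y z w x' y' z' w' : ℝ × ℝ}
    (h1 : SgnIff (detp (y-x) (w-x)) (detp (y'-x') (w'-x')))
    (h2 : SgnIff (detp (z-y) (w-y)) (detp (z'-y') (w'-y')))
    (h3 : SgnIff (detp (x-z) (w-z)) (detp (x'-z') (w'-z')))
    (h4 : SgnIff (detp (y-x) (z-x)) (detp (y'-x') (z'-x'))) :
    inTri x y z w ↔ inTri x' y' z' w' := by
  unfold inTri sideDet tD
  exact and_congr (prod_pos_transfer h1 h4)
    (and_congr (prod_pos_transfer h2 h4) (prod_pos_transfer h3 h4))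

lemma cross_transfer {x y u w x' y' u' w' : ℝ × ℝ}
    (h1 : SgnIff (detp (y-x) (u-x)) (detp (y'-x') (u'-x')))
    (h2 : SgnIff (detp (y-x) (w-x)) (detp (y'-x') (w'-x')))
    (h3 : SgnIff (detp (w-u) (x-u)) (detp (w'-u') (x'-u')))
    (h4 : SgnIff (detp (w-u) (y-u)) (detp (w'-u') (y'-u'))) :
    Cross x y u w ↔ Cross x' y' u' w' := by
  unfold Cross sideDet
  exact and_congr (prod_neg_transfer h1 h2) (prod_neg_transfer h3 h4)

lemma tripleSetEq_iff {α : Type*} (a b c d e g : α) :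
    (({a, b, c} : Set α) = {d, e, g}) ↔
      ((a=d∨a=e∨a=g)∧(b=d∨b=e∨b=g)∧(c=d∨c=e∨c=g)∧
       (d=a∨d=b∨d=c)∧(e=a∨e=b∨e=c)∧(g=a∨g=b∨g=c)) := by
  constructor
  · intro h
    have ha : a ∈ ({d,e,g} : Set α) := by rw [← h]; simp
    have hb : b ∈ ({d,e,g} : Set α) := by rw [← h]; simp
    have hc : c ∈ ({d,e,g} : Set α) := by rw [← h]; simp
    have hd : d ∈ ({a,b,c} : Set α) := by rw [h]; simp
    have he : e ∈ ({a,b,c} : Set α) := by rw [h]; simp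
    have hg : g ∈ ({a,b,c} : Set α) := by rw [h]; simp
    simp only [Set.mem_insert_iff, Set.mem_singleton_iff] at ha hb hc hd he hg
    exact ⟨ha, hb, hc, hd, he, hg⟩
  · rintro ⟨h1, h2, h3, h4, h5, h6⟩
    ext q
    simp only [Set.mem_insert_iff, Set.mem_singleton_iff]
    constructor
    · rintro (rfl | rfl | rfl); exacts [h1, h2, h3]
    · rintro (rfl | rfl | rfl); exacts [h4, h5, h6]

lemma collinear_of_det_zero {p q r : ℝ × ℝ} (h : detp (q-p) (r-p) = 0) :
    Collinear ℝ ({p, q, r} : Set (ℝ × ℝ)) := by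
  rw [collinear_iff_of_mem (Set.mem_insert p {q, r})]
  obtain ⟨px, py⟩ := p
  obtain ⟨qx, qy⟩ := q
  obtain ⟨rx, ry⟩ := r
  simp only [detp, Prod.fst_sub, Prod.snd_sub] at h
  by_cases hq : qx = px ∧ qy = py
  · refine ⟨(rx - px, ry - py), ?_⟩
    intro pt hpt
    simp only [Set.mem_insert_iff, Set.mem_singleton_iff] at hpt
    rcases hpt with rfl | rfl | rfl
    · exact ⟨0, by simp⟩
    · exact ⟨0, by simp [Prod.ext_iff, hq.1, hq.2]⟩
    · exact ⟨1, by simp [Prod.ext_iff]⟩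
  · refine ⟨(qx - px, qy - py), ?_⟩
    intro pt hpt
    simp only [Set.mem_insert_iff, Set.mem_singleton_iff] at hpt
    rcases hpt with rfl | rfl | rfl
    · exact ⟨0, by simp⟩
    · exact ⟨1, by simp [Prod.ext_iff]⟩
    · rw [not_and_or] at hq
      by_cases hx : qx - px = 0
      · have hy : qy - py ≠ 0 := by
          rcases hq with h' | h'
          · exact absurd (by linarith [sub_eq_zero.mp hx] : qx = px) h'
          · intro h0; exact h' (by linarith [sub_eq_zero.mp h0])
        refine ⟨(ry - py)/(qy - py), ?_⟩
        have hrx : rx - px = 0 := by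
          rw [hx] at h
          have : (qy - py) * (rx - px) = 0 := by linarith
          rcases mul_eq_zero.mp this with h' | h'
          · exact absurd h' hy
          · exact h'
        simp only [Prod.ext_iff, Prod.smul_mk, smul_eq_mul, Prod.mk_add_mk, vadd_eq_add]
        constructor
        · rw [hx, mul_zero, zero_add]; linarith [hrx]
        · field_simp; ring
      · refine ⟨(rx - px)/(qx - px), ?_⟩
        simp only [Prod.ext_iff, Prod.smul_mk, smul_eq_mul, Prod.mk_add_mk, vadd_eq_add]
        constructor
        · field_simp; ring
        · have : ry - py = (qy - py) * (rx - px) / (qx - px) := by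
            field_simp; linarith
          rw [div_mul_eq_mul_div, mul_comm]
          rw [eq_comm, div_add' _ _ _ hx, div_eq_iff hx]
          linarith [this, (div_eq_iff hx).mp this.symm]

set_option maxHeartbeats 2000000 in
theorem orientation_preserving_bijection_preserves_intersection
    (P Q : Finset (ℝ × ℝ)) (hP : StrictConvexPos P) (hQ : StrictConvexPos Q)
    (f : ℝ × ℝ → ℝ × ℝ) (hf : Set.BijOn f (P : Set (ℝ × ℝ)) (Q : Set (ℝ × ℝ)))
    (horient : ∀ a ∈ P, ∀ b ∈ P, ∀ c ∈ P, a ≠ b → a ≠ c → b ≠ c →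
      Real.sign (detp (b - a) (c - a)) = Real.sign (detp (f b - f a) (f c - f a)))
    (a b c d e g : ℝ × ℝ)
    (haP : a ∈ P) (hbP : b ∈ P) (hcP : c ∈ P)
    (hdP : d ∈ P) (heP : e ∈ P) (hgP : g ∈ P)
    (hab : a ≠ b) (hac : a ≠ c) (hbc : b ≠ c)
    (hde : d ≠ e) (hdg : d ≠ g) (heg : e ≠ g) :
    (interior (convexHull ℝ ({a, b, c} : Set (ℝ × ℝ))) ∩
        interior (convexHull ℝ ({d, e, g} : Set (ℝ × ℝ)))).Nonempty ↔
      (interior (convexHull ℝ ({f a, f b, f c} : Set (ℝ × ℝ))) ∩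
        interior (convexHull ℝ ({f d, f e, f g} : Set (ℝ × ℝ)))).Nonempty := by
  have hfinj : Set.InjOn f (P : Set (ℝ × ℝ)) := hf.2.1
  have hfmaps : Set.MapsTo f (P : Set (ℝ × ℝ)) (Q : Set (ℝ × ℝ)) := hf.1
  have hmem : ∀ pt : ℝ × ℝ, (pt=a∨pt=b∨pt=c∨pt=d∨pt=e∨pt=g) → pt ∈ P := by
    rintro pt (rfl | rfl | rfl | rfl | rfl | rfl)
    exacts [haP, hbP, hcP, hdP, heP, hgP]
  -- sign transfer for all triples from P
  have key : ∀ p q r : ℝ × ℝ, p ∈ P → q ∈ P → r ∈ P →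
      SgnIff (detp (q-p) (r-p)) (detp (f q - f p) (f r - f p)) := by
    intro p q r hp hq hr
    by_cases h1 : p = q
    · refine sgnIff_of_zero ?_ ?_
      · rw [h1, sub_self, detp_zero_left]
      · rw [h1, sub_self, detp_zero_left]
    by_cases h2 : p = r
    · refine sgnIff_of_zero ?_ ?_
      · rw [h2, sub_self, detp_zero_right]
      · rw [h2, sub_self, detp_zero_right]
    by_cases h3 : q = r
    · refine sgnIff_of_zero ?_ ?_
      · rw [h3, detp_self]
      · rw [h3, detp_self]
    have hd1 : detp (q-p) (r-p) ≠ 0 := fun h0 =>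
      hP.1 p hp q hq r hr h1 h2 h3 (collinear_of_det_zero h0)
    have hfp : f p ∈ Q := by
      have := hfmaps (Finset.mem_coe.mpr hp); exact Finset.mem_coe.mp this
    have hfq : f q ∈ Q := by
      have := hfmaps (Finset.mem_coe.mpr hq); exact Finset.mem_coe.mp this
    have hfr : f r ∈ Q := by
      have := hfmaps (Finset.mem_coe.mpr hr); exact Finset.mem_coe.mp this
    have hf1 : f p ≠ f q := fun h0 =>
      h1 (hfinj (Finset.mem_coe.mpr hp) (Finset.mem_coe.mpr hq) h0)
    have hf2 : f p ≠ f r := fun h0 =>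
      h2 (hfinj (Finset.mem_coe.mpr hp) (Finset.mem_coe.mpr hr) h0)
    have hf3 : f q ≠ f r := fun h0 =>
      h3 (hfinj (Finset.mem_coe.mpr hq) (Finset.mem_coe.mpr hr) h0)
    have hd2 : detp (f q - f p) (f r - f p) ≠ 0 := fun h0 =>
      hQ.1 (f p) hfp (f q) hfq (f r) hfr hf1 hf2 hf3 (collinear_of_det_zero h0)
    exact sgn_transfer hd1 hd2 (horient p hp q hq r hr h1 h2 h3)
  have K : ∀ p q r : ℝ × ℝ, (p=a∨p=b∨p=c∨p=d∨p=e∨p=g) → (q=a∨q=b∨q=c∨q=d∨q=e∨q=g) →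
      (r=a∨r=b∨r=c∨r=d∨r=e∨r=g) →
      SgnIff (detp (q-p) (r-p)) (detp (f q - f p) (f r - f p)) :=
    fun p q r hp hq hr => key p q r (hmem p hp) (hmem q hq) (hmem r hr)
  have Ma : a=a∨a=b∨a=c∨a=d∨a=e∨a=g := Or.inl rfl
  have Mb : b=a∨b=b∨b=c∨b=d∨b=e∨b=g := Or.inr (Or.inl rfl)
  have Mc : c=a∨c=b∨c=c∨c=d∨c=e∨c=g := Or.inr (Or.inr (Or.inl rfl))
  have Md : d=a∨d=b∨d=c∨d=d∨d=e∨d=g := Or.inr (Or.inr (Or.inr (Or.inl rfl)))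
  have Me : e=a∨e=b∨e=c∨e=d∨e=e∨e=g := Or.inr (Or.inr (Or.inr (Or.inr (Or.inl rfl))))
  have Mg : g=a∨g=b∨g=c∨g=d∨g=e∨g=g := Or.inr (Or.inr (Or.inr (Or.inr (Or.inr rfl))))
  have E : ∀ u v : ℝ × ℝ, u ∈ P → v ∈ P → ((u = v) ↔ (f u = f v)) := fun u v hu hv =>
    (hfinj.eq_iff (Finset.mem_coe.mpr hu) (Finset.mem_coe.mpr hv)).symm
  -- genericity for the original six points
  have hgen1 : ∀ p q r : ℝ × ℝ, (p=a∨p=b∨p=c∨p=d∨p=e∨p=g) → (q=a∨q=b∨q=c∨q=d∨q=e∨q=g) →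
      (r=a∨r=b∨r=c∨r=d∨r=e∨r=g) → p≠q → p≠r → q≠r → detp (q-p) (r-p) ≠ 0 := by
    intro p q r hp hq hr hpq hpr hqr h0
    exact hP.1 p (hmem p hp) q (hmem q hq) r (hmem r hr) hpq hpr hqr
      (collinear_of_det_zero h0)
  -- genericity for the image six points
  have hQmem : ∀ pt : ℝ × ℝ, (pt=f a∨pt=f b∨pt=f c∨pt=f d∨pt=f e∨pt=f g) → pt ∈ Q := by
    rintro pt (rfl | rfl | rfl | rfl | rfl | rfl) <;>
      exact Finset.mem_coe.mp (hfmaps (Finset.mem_coe.mpr (hmem _ (by tauto))))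
  have hgen2 : ∀ p q r : ℝ × ℝ, (p=f a∨p=f b∨p=f c∨p=f d∨p=f e∨p=f g) →
      (q=f a∨q=f b∨q=f c∨q=f d∨q=f e∨q=f g) →
      (r=f a∨r=f b∨r=f c∨r=f d∨r=f e∨r=f g) → p≠q → p≠r → q≠r →
      detp (q-p) (r-p) ≠ 0 := by
    intro p q r hp hq hr hpq hpr hqr h0
    exact hQ.1 p (hQmem p hp) q (hQmem q hq) r (hQmem r hr) hpq hpr hqr
      (collinear_of_det_zero h0)
  have hab' : f a ≠ f b := fun h0 => hab ((E a b haP hbP).mpr h0)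
  have hac' : f a ≠ f c := fun h0 => hac ((E a c haP hcP).mpr h0)
  have hbc' : f b ≠ f c := fun h0 => hbc ((E b c hbP hcP).mpr h0)
  have hde' : f d ≠ f e := fun h0 => hde ((E d e hdP heP).mpr h0)
  have hdg' : f d ≠ f g := fun h0 => hdg ((E d g hdP hgP).mpr h0)
  have heg' : f e ≠ f g := fun h0 => heg ((E e g heP hgP).mpr h0)
  -- transfer of Phi
  have htr : Phi a b c d e g ↔ Phi (f a) (f b) (f c) (f d) (f e) (f g) := by
    unfold Phi
    apply or_congr
    · rw [tripleSetEq_iff, tripleSetEq_iff]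
      rw [E a d haP hdP, E a e haP heP, E a g haP hgP,
        E b d hbP hdP, E b e hbP heP, E b g hbP hgP,
        E c d hcP hdP, E c e hcP heP, E c g hcP hgP,
        E d a hdP haP, E d b hdP hbP, E d c hdP hcP,
        E e a heP haP, E e b heP hbP, E e c heP hcP,
        E g a hgP haP, E g b hgP hbP, E g c hgP hcP]
    apply or_congr
    · exact or_congr
        (inTri_transfer (K a b d Ma Mb Md) (K b c d Mb Mc Md) (K c a d Mc Ma Md)
          (K a b c Ma Mb Mc))
        (or_congr
          (inTri_transfer (K a b e Ma Mb Me) (K b c e Mb Mc Me) (K c a e Mc Ma Me)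
            (K a b c Ma Mb Mc))
          (inTri_transfer (K a b g Ma Mb Mg) (K b c g Mb Mc Mg) (K c a g Mc Ma Mg)
            (K a b c Ma Mb Mc)))
    apply or_congr
    · exact or_congr
        (inTri_transfer (K d e a Md Me Ma) (K e g a Me Mg Ma) (K g d a Mg Md Ma)
          (K d e g Md Me Mg))
        (or_congr
          (inTri_transfer (K d e b Md Me Mb) (K e g b Me Mg Mb) (K g d b Mg Md Mb)
            (K d e g Md Me Mg))
          (inTri_transfer (K d e c Md Me Mc) (K e g c Me Mg Mc) (K g d c Mg Md Mc)
            (K d e g Md Me Mg)))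
    · exact or_congr
        (or_congr
          (cross_transfer (K a b d Ma Mb Md) (K a b e Ma Mb Me) (K d e a Md Me Ma)
            (K d e b Md Me Mb))
          (or_congr
            (cross_transfer (K a b e Ma Mb Me) (K a b g Ma Mb Mg) (K e g a Me Mg Ma)
              (K e g b Me Mg Mb))
            (cross_transfer (K a b g Ma Mb Mg) (K a b d Ma Mb Md) (K g d a Mg Md Ma)
              (K g d b Mg Md Mb))))
        (or_congr
          (or_congr
            (cross_transfer (K b c d Mb Mc Md) (K b c e Mb Mc Me) (K d e b Md Me Mb)
              (K d e c Md Me Mc))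
            (or_congr
              (cross_transfer (K b c e Mb Mc Me) (K b c g Mb Mc Mg) (K e g b Me Mg Mb)
                (K e g c Me Mg Mc))
              (cross_transfer (K b c g Mb Mc Mg) (K b c d Mb Mc Md) (K g d b Mg Md Mb)
                (K g d c Mg Md Mc))))
          (or_congr
            (cross_transfer (K c a d Mc Ma Md) (K c a e Mc Ma Me) (K d e c Md Me Mc)
              (K d e a Md Me Ma))
            (or_congr
              (cross_transfer (K c a e Mc Ma Me) (K c a g Mc Ma Mg) (K e g c Me Mg Mc)
                (K e g a Me Mg Ma))
              (cross_transfer (K c a g Mc Ma Mg) (K c a d Mc Ma Md) (K g d c Mg Md Mc)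
                (K g d a Mg Md Ma)))))
  exact ((mainChar a b c d e g hab hac hbc hde hdg heg hgen1).trans htr).trans
    (mainChar (f a) (f b) (f c) (f d) (f e) (f g) hab' hac' hbc' hde' hdg' heg' hgen2).symm
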